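/- The Lovász extension f̂ of a submodular function f is convex on the cube [0,1]^n, and its minimum value over [0,1]^n equals the minimum of f over all subsets of the ground set: min_{x∈[0,1]^n} f̂(x) = min_{S⊆V} f(S). -/

import Mathlib

open MeasureTheory

noncomputable def lovasz (n : ℕ) (f : Finset (Fin n) → ℝ) (x : Fin n → ℝ) : ℝ :=
  ∫ t in (0:ℝ)..1, f (Finset.univ.filter fun i => t ≤ x i)

namespace LovaszAux

variable {n : ℕ}

/-- The superlevel set. -/
noncomputable def At (x : Fin n → ℝ) (t : ℝ) : Finset (Fin n) := Finset.univ.filter fun i => t ≤ x i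

/-- The chain of prefixes. -/
def chC (e : ℕ → Fin n) (k : ℕ) : Finset (Fin n) := (Finset.range k).image e

lemma chC_zero (e : ℕ → Fin n) : chC e 0 = ∅ := by simp [chC]

lemma chC_succ (e : ℕ → Fin n) (k : ℕ) : chC e (k+1) = insert (e k) (chC e k) := by
  simp [chC, Finset.range_add_one]

lemma step_intg (c d : ℝ) :
    IntervalIntegrable (fun t => if t ≤ c then d else 0) volume 0 1 := by
  have h : (fun t : ℝ => if t ≤ c then d else 0) = (Set.Iic c).indicator (fun _ => d) := by
    funext t; by_cases h : t ≤ c <;> simp [Set.indicator, Set.mem_Iic, h]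
  rw [h, intervalIntegrable_iff]
  exact (integrableOn_const (by rw [Set.uIoc_of_le zero_le_one]; exact measure_Ioc_lt_top.ne)).indicator measurableSet_Iic

lemma step_int (c d : ℝ) (hc0 : 0 ≤ c) (hc1 : c ≤ 1) :
    (∫ t in (0:ℝ)..1, if t ≤ c then d else 0) = d * c := by
  have h : (fun t : ℝ => if t ≤ c then d else 0) = (Set.Iic c).indicator (fun _ => d) := by
    funext t; by_cases h : t ≤ c <;> simp [Set.indicator, Set.mem_Iic, h]
  rw [h, intervalIntegral.integral_of_le zero_le_one, setIntegral_indicator measurableSet_Iic]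
  have h2 : Set.Ioc (0:ℝ) 1 ∩ Set.Iic c = Set.Ioc 0 c := by
    ext t
    simp only [Set.mem_inter_iff, Set.mem_Ioc, Set.mem_Iic]
    constructor
    · rintro ⟨⟨h1, _⟩, h3⟩; exact ⟨h1, h3⟩
    · rintro ⟨h1, h3⟩; exact ⟨⟨h1, h3.trans hc1⟩, h3⟩
  rw [h2, setIntegral_const, Real.volume_real_Ioc_of_le hc0, smul_eq_mul, mul_comm]
  ring_nf

section chain

variable (f : Finset (Fin n) → ℝ) (e : ℕ → Fin n)

/-- The linear functional associated to a chain. -/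
def lin (x : Fin n → ℝ) : ℝ :=
  ∑ k ∈ Finset.range n, (f (chC e (k+1)) - f (chC e k)) * x (e k)

variable (hinj : ∀ j k, j < n → k < n → e j = e k → j = k)
  (hsurj : ∀ i : Fin n, ∃ k, k < n ∧ e k = i)

include hsurj in
lemma chC_top : chC e n = Finset.univ := by
  ext i
  simp only [chC, Finset.mem_image, Finset.mem_range, Finset.mem_univ, iff_true]
  obtain ⟨k, hk, he⟩ := hsurj i
  exact ⟨k, hk, he⟩

include hinj hsurj in
lemma chain_sum_le (hsub : ∀ A B : Finset (Fin n), f (A ∪ B) + f (A ∩ B) ≤ f A + f B)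
    (hf0 : f ∅ = 0) (A : Finset (Fin n)) :
    (∑ k ∈ Finset.range n, if e k ∈ A then f (chC e (k+1)) - f (chC e k) else 0) ≤ f A := by
  have key : ∀ k ∈ Finset.range n,
      (if e k ∈ A then f (chC e (k+1)) - f (chC e k) else 0)
        ≤ f (A ∩ chC e (k+1)) - f (A ∩ chC e k) := by
    intro k hk
    by_cases hA : e k ∈ A
    · simp only [hA, if_true]
      have h := hsub (chC e k) (A ∩ chC e (k+1))
      have hu : chC e k ∪ (A ∩ chC e (k+1)) = chC e (k+1) := by
        rw [chC_succ]
        ext i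
        simp only [Finset.mem_union, Finset.mem_inter, Finset.mem_insert]
        constructor
        · rintro (h1 | ⟨h1, (rfl | h2)⟩)
          · exact Or.inr h1
          · exact Or.inl rfl
          · exact Or.inr h2
        · rintro (rfl | h1)
          · exact Or.inr ⟨hA, Or.inl rfl⟩
          · exact Or.inl h1
      have hi : chC e k ∩ (A ∩ chC e (k+1)) = A ∩ chC e k := by
        rw [chC_succ]
        ext i
        simp only [Finset.mem_inter, Finset.mem_insert]
        constructor
        · rintro ⟨h1, h2, _⟩; exact ⟨h2, h1⟩
        · rintro ⟨h1, h2⟩; exact ⟨h2, h1, Or.inr h2⟩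
      rw [hu, hi] at h
      rw [Finset.inter_comm A (chC e (k+1)), Finset.inter_comm A (chC e k)] at *
      linarith
    · simp only [hA, if_false]
      have : A ∩ chC e (k+1) = A ∩ chC e k := by
        rw [chC_succ]
        ext i
        simp only [Finset.mem_inter, Finset.mem_insert]
        constructor
        · rintro ⟨h1, (rfl | h2)⟩
          · exact absurd h1 hA
          · exact ⟨h1, h2⟩
        · rintro ⟨h1, h2⟩; exact ⟨h1, Or.inr h2⟩
      rw [this, sub_self]
  calc (∑ k ∈ Finset.range n, if e k ∈ A then f (chC e (k+1)) - f (chC e k) else 0)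
      ≤ ∑ k ∈ Finset.range n, (f (A ∩ chC e (k+1)) - f (A ∩ chC e k)) :=
        Finset.sum_le_sum key
    _ = f (A ∩ chC e n) - f (A ∩ chC e 0) := Finset.sum_range_sub (fun k => f (A ∩ chC e k)) n
    _ = f A := by
        rw [chC_top e hsurj, chC_zero, Finset.inter_univ, Finset.inter_empty, hf0, sub_zero]

include hinj hsurj in
/-- Pointwise integrand inequality. -/
lemma integrand_le (hsub : ∀ A B : Finset (Fin n), f (A ∪ B) + f (A ∩ B) ≤ f A + f B)
    (hf0 : f ∅ = 0) (x : Fin n → ℝ) (t : ℝ) :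
    (∑ k ∈ Finset.range n, if t ≤ x (e k) then f (chC e (k+1)) - f (chC e k) else 0)
      ≤ f (At x t) := by
  have h := chain_sum_le f e hinj hsurj hsub hf0 (At x t)
  have h2 : ∀ k, (e k ∈ At x t) = (t ≤ x (e k)) := by
    intro k; simp [At]
  simpa only [h2] using h

include hinj hsurj in
/-- Pointwise integrand equality for an adapted enumeration. -/
lemma integrand_eq (hf0 : f ∅ = 0) (x : Fin n → ℝ)
    (hadapt : ∀ j k, j ≤ k → k < n → x (e k) ≤ x (e j)) (t : ℝ) :
    f (At x t)
      = ∑ k ∈ Finset.range n, if t ≤ x (e k) then f (chC e (k+1)) - f (chC e k) else 0 := by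
  classical
  set M : Finset ℕ := (Finset.range n).filter (fun k => t ≤ x (e k)) with hM
  have hMn : ∀ k ∈ M, k < n := by
    intro k hk; exact Finset.mem_range.mp (Finset.mem_filter.mp hk).1
  obtain ⟨m, hmn, hMr⟩ : ∃ m, m ≤ n ∧ M = Finset.range m := by
    rcases Finset.eq_empty_or_nonempty M with h | h
    · exact ⟨0, Nat.zero_le n, by simp [h]⟩
    · refine ⟨M.max' h + 1, hMn _ (M.max'_mem h), ?_⟩
      ext k
      simp only [Finset.mem_range, Nat.lt_succ_iff]
      constructor
      · intro hk; exact Finset.le_max' M k hk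
      · intro hk
        have hmax := Finset.mem_filter.mp (M.max'_mem h)
        have h1 : k < n := lt_of_le_of_lt hk (Finset.mem_range.mp hmax.1)
        refine Finset.mem_filter.mpr ⟨Finset.mem_range.mpr h1, ?_⟩
        exact le_trans hmax.2 (hadapt k (M.max' h) hk (Finset.mem_range.mp hmax.1))
  have hAt : At x t = chC e m := by
    ext i
    simp only [At, chC, Finset.mem_filter, Finset.mem_univ, true_and, Finset.mem_image,
      Finset.mem_range]
    constructor
    · intro hi
      obtain ⟨k, hk, rfl⟩ := hsurj i
      have : k ∈ M := Finset.mem_filter.mpr ⟨Finset.mem_range.mpr hk, hi⟩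
      rw [hMr, Finset.mem_range] at this
      exact ⟨k, this, rfl⟩
    · rintro ⟨k, hk, rfl⟩
      have : k ∈ M := by rw [hMr, Finset.mem_range]; exact hk
      exact (Finset.mem_filter.mp this).2
  rw [hAt]
  rw [← Finset.sum_filter, ← hM, hMr]
  rw [Finset.sum_range_sub (fun k => f (chC e k)) m, chC_zero, hf0, sub_zero]

end chain

/-- Existence of an adapted enumeration. -/
lemma exists_adapted (hn : 0 < n) (x : Fin n → ℝ) :
    ∃ e : ℕ → Fin n, (∀ j k, j < n → k < n → e j = e k → j = k) ∧
      (∀ i : Fin n, ∃ k, k < n ∧ e k = i) ∧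
      (∀ j k, j ≤ k → k < n → x (e k) ≤ x (e j)) := by
  classical
  set σ := Tuple.sort (fun i => -x i) with hσ
  refine ⟨fun k => if h : k < n then σ ⟨k, h⟩ else σ ⟨0, hn⟩, ?_, ?_, ?_⟩
  · intro j k hj hk hjk
    simp only [dif_pos hj, dif_pos hk] at hjk
    have := σ.injective hjk
    exact Fin.mk.inj_iff.mp this
  · intro i
    refine ⟨(σ.symm i : ℕ), (σ.symm i).isLt, ?_⟩
    simp only [dif_pos (σ.symm i).isLt]
    have : (⟨(σ.symm i : ℕ), (σ.symm i).isLt⟩ : Fin n) = σ.symm i := by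
      apply Fin.ext; rfl
    rw [this, Equiv.apply_symm_apply]
  · intro j k hjk hk
    have hj : j < n := lt_of_le_of_lt hjk hk
    simp only [dif_pos hj, dif_pos hk]
    have hmono := Tuple.monotone_sort (fun i => -x i)
    have := hmono (a := ⟨j, hj⟩) (b := ⟨k, hk⟩) (by exact hjk)
    simp only [Function.comp_apply, ← hσ] at this
    linarith

variable (f : Finset (Fin n) → ℝ)

/-- Integrability of the Lovász integrand. -/
lemma intg (hn : 0 < n) (hf0 : f ∅ = 0) (x : Fin n → ℝ) :
    IntervalIntegrable (fun t => f (At x t)) volume 0 1 := by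
  obtain ⟨e, hinj, hsurj, hadapt⟩ := exists_adapted hn x
  have heq : (fun t => f (At x t))
      = ∑ k ∈ Finset.range n, fun t =>
          if t ≤ x (e k) then f (chC e (k+1)) - f (chC e k) else 0 := by
    funext t
    rw [Finset.sum_apply]
    exact integrand_eq f e hinj hsurj hf0 x hadapt t
  rw [heq]
  exact IntervalIntegrable.sum _ (fun k _ => step_intg _ _)

lemma lovasz_eq_int (x : Fin n → ℝ) :
    lovasz n f x = ∫ t in (0:ℝ)..1, f (At x t) := rfl

/-- The linear functional is everywhere below the Lovász extension on the cube. -/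
lemma lin_le (hn : 0 < n) (hsub : ∀ A B : Finset (Fin n), f (A ∪ B) + f (A ∩ B) ≤ f A + f B)
    (hf0 : f ∅ = 0) (e : ℕ → Fin n)
    (hinj : ∀ j k, j < n → k < n → e j = e k → j = k)
    (hsurj : ∀ i : Fin n, ∃ k, k < n ∧ e k = i)
    (x : Fin n → ℝ) (hx : ∀ i, 0 ≤ x i ∧ x i ≤ 1) :
    lin f e x ≤ lovasz n f x := by
  have hstep : ∀ k ∈ Finset.range n,
      IntervalIntegrable (fun t => if t ≤ x (e k) then f (chC e (k+1)) - f (chC e k) else 0)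
        volume 0 1 := fun k _ => step_intg _ _
  have h1 : lin f e x = ∫ t in (0:ℝ)..1,
      ∑ k ∈ Finset.range n, if t ≤ x (e k) then f (chC e (k+1)) - f (chC e k) else 0 := by
    rw [intervalIntegral.integral_finset_sum hstep]
    unfold lin
    refine Finset.sum_congr rfl (fun k _ => ?_)
    rw [step_int _ _ (hx (e k)).1 (hx (e k)).2]
  have hint1 : IntervalIntegrable (fun t =>
      ∑ k ∈ Finset.range n, if t ≤ x (e k) then f (chC e (k+1)) - f (chC e k) else 0)
      volume 0 1 := by
    have heq : (fun t => ∑ k ∈ Finset.range n,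
        if t ≤ x (e k) then f (chC e (k+1)) - f (chC e k) else 0)
        = ∑ k ∈ Finset.range n, fun t =>
            if t ≤ x (e k) then f (chC e (k+1)) - f (chC e k) else 0 := by
      funext t; rw [Finset.sum_apply]
    rw [heq]
    exact IntervalIntegrable.sum _ hstep
  rw [h1, lovasz_eq_int]
  exact intervalIntegral.integral_mono_on zero_le_one hint1
    (intg f hn hf0 x) (fun t _ => integrand_le f e hinj hsurj hsub hf0 x t)

/-- The Lovász extension equals the adapted linear functional. -/
lemma lin_eq (hf0 : f ∅ = 0) (e : ℕ → Fin n)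
    (hinj : ∀ j k, j < n → k < n → e j = e k → j = k)
    (hsurj : ∀ i : Fin n, ∃ k, k < n ∧ e k = i)
    (x : Fin n → ℝ) (hx : ∀ i, 0 ≤ x i ∧ x i ≤ 1)
    (hadapt : ∀ j k, j ≤ k → k < n → x (e k) ≤ x (e j)) :
    lovasz n f x = lin f e x := by
  have h1 : lovasz n f x = ∫ t in (0:ℝ)..1,
      ∑ k ∈ Finset.range n, if t ≤ x (e k) then f (chC e (k+1)) - f (chC e k) else 0 := by
    rw [lovasz_eq_int]
    congr 1
    funext t
    exact integrand_eq f e hinj hsurj hf0 x hadapt t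
  rw [h1, intervalIntegral.integral_finset_sum (fun k _ => step_intg _ _)]
  unfold lin
  refine Finset.sum_congr rfl (fun k _ => ?_)
  rw [step_int _ _ (hx (e k)).1 (hx (e k)).2]

/-- Lovász extension of an indicator vector. -/
lemma lovasz_indicator (S : Finset (Fin n)) :
    lovasz n f (fun i => if i ∈ S then (1:ℝ) else 0) = f S := by
  rw [lovasz_eq_int, intervalIntegral.integral_of_le zero_le_one]
  have h : ∀ t ∈ Set.Ioc (0:ℝ) 1, f (At (fun i => if i ∈ S then (1:ℝ) else 0) t) = f S := by
    intro t ht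
    congr 1
    ext i
    simp only [At, Finset.mem_filter, Finset.mem_univ, true_and]
    by_cases hi : i ∈ S
    · simp [hi, ht.2]
    · simp only [hi, if_false, iff_false, not_le]
      exact ht.1
  rw [setIntegral_congr_fun measurableSet_Ioc h, setIntegral_const]
  simp

end LovaszAux

open LovaszAux in
theorem stmt0 (n : ℕ) (hn : 1 ≤ n) (f : Finset (Fin n) → ℝ)
    (hsub : ∀ A B : Finset (Fin n), f (A ∪ B) + f (A ∩ B) ≤ f A + f B)
    (hf0 : f ∅ = 0) :
    ConvexOn ℝ (Set.Icc (0 : Fin n → ℝ) 1) (lovasz n f) ∧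
      sInf (lovasz n f '' Set.Icc (0 : Fin n → ℝ) 1) =
        sInf (Set.range fun S : Finset (Fin n) => f S) := by
  have hn0 : 0 < n := hn
  have hcube : ∀ x : Fin n → ℝ, x ∈ Set.Icc (0 : Fin n → ℝ) 1 ↔ ∀ i, 0 ≤ x i ∧ x i ≤ 1 := by
    intro x
    simp only [Set.mem_Icc, Pi.le_def, Pi.zero_apply, Pi.one_apply]
    constructor
    · rintro ⟨h1, h2⟩ i; exact ⟨h1 i, h2 i⟩
    · intro h; exact ⟨fun i => (h i).1, fun i => (h i).2⟩
  constructor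
  · refine ⟨convex_Icc _ _, ?_⟩
    intro x hx y hy a b ha hb hab
    set z := a • x + b • y with hz
    have hzc : ∀ i, 0 ≤ z i ∧ z i ≤ 1 := by
      have : z ∈ Set.Icc (0 : Fin n → ℝ) 1 :=
        (convex_Icc (0 : Fin n → ℝ) 1) hx hy ha hb hab
      exact (hcube z).mp this
    obtain ⟨e, hinj, hsurj, hadapt⟩ := exists_adapted hn0 z
    have h1 : lovasz n f z = lin f e z := lin_eq f hf0 e hinj hsurj z hzc hadapt
    have h2 : lin f e z = a * lin f e x + b * lin f e y := by
      unfold lin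
      rw [Finset.mul_sum, Finset.mul_sum, ← Finset.sum_add_distrib]
      refine Finset.sum_congr rfl (fun k _ => ?_)
      have : z (e k) = a * x (e k) + b * y (e k) := by
        simp [hz, Pi.add_apply, Pi.smul_apply, smul_eq_mul]
      rw [this]; ring
    have h3 : lin f e x ≤ lovasz n f x :=
      lin_le f hn0 hsub hf0 e hinj hsurj x ((hcube x).mp hx)
    have h4 : lin f e y ≤ lovasz n f y :=
      lin_le f hn0 hsub hf0 e hinj hsurj y ((hcube y).mp hy)
    rw [h1, h2]
    have := add_le_add (mul_le_mul_of_nonneg_left h3 ha) (mul_le_mul_of_nonneg_left h4 hb)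
    simpa [smul_eq_mul] using this
  · -- the sInf part
    set m := sInf (Set.range fun S : Finset (Fin n) => f S) with hm
    have hfin : (Set.range fun S : Finset (Fin n) => f S).Finite := Set.finite_range _
    have hne : (Set.range fun S : Finset (Fin n) => f S).Nonempty := ⟨f ∅, ⟨∅, rfl⟩⟩
    have hbdd : BddBelow (Set.range fun S : Finset (Fin n) => f S) := hfin.bddBelow
    have hmle : ∀ S : Finset (Fin n), m ≤ f S := fun S => csInf_le hbdd ⟨S, rfl⟩
    -- lower bound for lovasz on the cube
    have hlow : ∀ x : Fin n → ℝ, m ≤ lovasz n f x := by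
      intro x
      have h1 : (∫ t in (0:ℝ)..1, m) ≤ ∫ t in (0:ℝ)..1, f (At x t) :=
        intervalIntegral.integral_mono_on zero_le_one intervalIntegrable_const
          (intg f hn0 hf0 x) (fun t _ => hmle _)
      rw [intervalIntegral.integral_const] at h1
      simpa [lovasz_eq_int] using h1
    have hbddim : BddBelow (lovasz n f '' Set.Icc (0 : Fin n → ℝ) 1) := by
      refine ⟨m, ?_⟩
      rintro b ⟨x, _, rfl⟩
      exact hlow x
    have hneim : (lovasz n f '' Set.Icc (0 : Fin n → ℝ) 1).Nonempty := by
      refine ⟨lovasz n f 0, ⟨0, ?_, rfl⟩⟩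
      exact Set.mem_Icc.mpr ⟨le_refl _, zero_le_one⟩
    apply le_antisymm
    · refine le_csInf hne ?_
      rintro b ⟨S, rfl⟩
      have hmem : (fun i => if i ∈ S then (1:ℝ) else 0) ∈ Set.Icc (0 : Fin n → ℝ) 1 := by
        rw [hcube]
        intro i
        by_cases hi : i ∈ S <;> simp [hi]
      have : f S ∈ lovasz n f '' Set.Icc (0 : Fin n → ℝ) 1 :=
        ⟨_, hmem, lovasz_indicator f S⟩
      exact csInf_le hbddim this
    · refine le_csInf hneim ?_
      rintro b ⟨x, _, rfl⟩
      exact hlow x
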